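/- Let μ_1(x), …, μ_L(x) ∈ F[x] be pairwise coprime monic polynomials such that μ_1(x)·…·μ_L(x) = M(x) and μ_i(x) divides m_i(x) for each i. Set M_i(x) = M(x)/μ_i(x), and let D_i(x) ∈ F[x] satisfy D_i(x)·M_i(x) ≡ 1 (mod μ_i(x)) whenever deg(μ_i) > 0, and D_i(x) = 0 whenever μ_i(x) = 1. Then every a(x) ∈ F[x] with deg(a) < deg(M) satisfies a(x) = [ Σ_{i=1}^{L} [a]_{m_i}(x)·D_i(x)·M_i(x) ]_{M(x)} (the Chinese Remainder Theorem reconstruction for non-pairwise coprime polynomial moduli). -/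

import Mathlib

open Polynomial
open scoped Classical

/-- The Chinese Remainder Theorem reconstruction formula for
non-pairwise coprime polynomial moduli:
`a = [ Σ_i [a]_{m_i} · D_i · M_i ]_M`, where `M_i = M / μ_i` and
`D_i · M_i ≡ 1 (mod μ_i)` (with `D_i = 0` when `μ_i = 1`). -/
theorem stmt1 {F : Type*} [Field F] {L : ℕ} (hL : 2 ≤ L)
    (m : Fin L → Polynomial F)
    (hmonic : ∀ i, (m i).Monic)
    (hdist : Function.Injective m)
    (hdeg : ∀ i, 0 < (m i).degree)
    (μ : Fin L → Polynomial F)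
    (hμmonic : ∀ i, (μ i).Monic)
    (hμcop : ∀ i j, i ≠ j → IsCoprime (μ i) (μ j))
    (hμprod : ∏ i, μ i = Finset.univ.lcm m)
    (hμdvd : ∀ i, μ i ∣ m i)
    (D : Fin L → Polynomial F)
    (hD : ∀ i, 0 < (μ i).degree →
      μ i ∣ D i * (Finset.univ.lcm m /ₘ μ i) - 1)
    (hD0 : ∀ i, μ i = 1 → D i = 0)
    (a : Polynomial F)
    (ha : a.degree < (Finset.univ.lcm m).degree) :
    a = (∑ i, (a %ₘ m i) * D i * (Finset.univ.lcm m /ₘ μ i)) %ₘ Finset.univ.lcm m := by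
  set M : Polynomial F := Finset.univ.lcm m with hM
  have hMmonic : M.Monic := by
    rw [← hμprod]; exact monic_prod_of_monic _ _ fun i _ => hμmonic i
  set S : Polynomial F := ∑ i, (a %ₘ m i) * D i * (M /ₘ μ i) with hS
  -- factorization M = μ i * (M /ₘ μ i)
  have hfac : ∀ i, M = μ i * (M /ₘ μ i) := by
    intro i
    have hdvdi : μ i ∣ M := by
      rw [← hμprod]; exact Finset.dvd_prod_of_mem μ (Finset.mem_univ i)
    have := modByMonic_add_div M (μ i)
    rwa [(modByMonic_eq_zero_iff_dvd (hμmonic i)).2 hdvdi, zero_add, eq_comm] at this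
  -- μ i ∣ M /ₘ μ j for i ≠ j
  have hrest : ∀ i j, i ≠ j → μ i ∣ M /ₘ μ j := by
    intro i j hij
    have h1 : μ j * (M /ₘ μ j) = μ j * ∏ k ∈ Finset.univ.erase j, μ k := by
      rw [← hfac j, ← hμprod, Finset.mul_prod_erase _ _ (Finset.mem_univ j)]
    have hμj0 : μ j ≠ 0 := (hμmonic j).ne_zero
    have h2 : M /ₘ μ j = ∏ k ∈ Finset.univ.erase j, μ k := mul_left_cancel₀ hμj0 h1
    rw [h2]
    exact Finset.dvd_prod_of_mem μ (Finset.mem_erase.2 ⟨hij, Finset.mem_univ i⟩)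
  -- each μ i divides S - a
  have hcong : ∀ i, μ i ∣ S - a := by
    intro i
    have hterm : μ i ∣ (a %ₘ m i) * D i * (M /ₘ μ i) - a := by
      by_cases hμ1 : μ i = 1
      · rw [hμ1]; exact one_dvd _
      · have hdegμ : 0 < (μ i).degree := by
          rcases lt_or_ge 0 (μ i).degree with h | h
          · exact h
          · exfalso
            have := eq_C_of_degree_le_zero h
            have hc : (μ i).coeff 0 = 1 := by
              have hnd : (μ i).natDegree = 0 := natDegree_eq_zero_iff_degree_le_zero.2 h
              have := (hμmonic i).leadingCoeff
              rwa [Polynomial.leadingCoeff, hnd] at this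
            exact hμ1 (by rw [this, hc, map_one])
        have h1 : μ i ∣ (a %ₘ m i) * (D i * (M /ₘ μ i) - 1) :=
          Dvd.dvd.mul_left (hD i hdegμ) _
        have h2 : μ i ∣ (a %ₘ m i) - a := by
          have hma : m i ∣ a - a %ₘ m i := by
            have := modByMonic_add_div a (m i)
            exact ⟨a /ₘ m i, by linear_combination -this⟩
          simpa [neg_sub] using dvd_neg.2 ((hμdvd i).trans hma)
        have := dvd_add h1 h2
        convert this using 1; ring
    have hsum : S - a = ((a %ₘ m i) * D i * (M /ₘ μ i) - a)
        + ∑ j ∈ Finset.univ.erase i, (a %ₘ m j) * D j * (M /ₘ μ j) := by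
      rw [hS, ← Finset.add_sum_erase _ _ (Finset.mem_univ i)]; ring
    rw [hsum]
    refine dvd_add hterm (Finset.dvd_sum fun j hj => ?_)
    exact Dvd.dvd.mul_left (hrest i j (Finset.ne_of_mem_erase hj).symm) _
  -- M divides S - a
  have hMdvd : M ∣ S - a := by
    rw [← hμprod]
    exact Fintype.prod_dvd_of_coprime (fun i j hij => hμcop i j hij) hcong
  obtain ⟨c, hc⟩ := hMdvd
  have : S %ₘ M = a %ₘ M := by
    have hSa : S = a + M * c := by linear_combination hc
    rw [hSa, add_modByMonic, (modByMonic_eq_zero_iff_dvd hMmonic).2 ⟨c, rfl⟩, add_zero]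
  rw [this, (modByMonic_eq_self_iff hMmonic).2 ha]
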